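/- Let R be a commutative ring and M an N × N matrix over R. The 2N × 2N skew-symmetric block matrix S = [[0, M], [-ᵗM, 0]] satisfies Pf(S) = (-1)^{N(N-1)/2} det M. -/

import Mathlib

open Matrix

/-!
STATEMENT 2: For an `N × N` matrix `M` over a commutative ring `R`, the `2N × 2N`
skew-symmetric block matrix `S = [[0, M], [-ᵗM, 0]]` satisfies
`Pf(S) = (-1)^{N(N-1)/2} det M`.
-/

/-- `⟨2k, _⟩ : Fin (2m)`. -/
def evenIdx {m : ℕ} (k : Fin m) : Fin (2 * m) := ⟨2 * k.1, by have := k.isLt; omega⟩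

/-- `⟨2k+1, _⟩ : Fin (2m)`. -/
def oddIdx {m : ℕ} (k : Fin m) : Fin (2 * m) := ⟨2 * k.1 + 1, by have := k.isLt; omega⟩

/-- The Pfaffian of a `2m × 2m` matrix, as a signed sum over perfect matchings of
`{1,…,2m}`, encoded as permutations `σ` with `σ(2k-1) < σ(2k)` and
`σ(1) < σ(3) < ⋯ < σ(2m-1)`. -/
def pfaffian {R : Type*} [CommRing R] {m : ℕ}
    (A : Matrix (Fin (2 * m)) (Fin (2 * m)) R) : R :=
  ∑ σ : Equiv.Perm (Fin (2 * m)),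
    if (∀ k : Fin m, σ (evenIdx k) < σ (oddIdx k)) ∧
        (∀ k l : Fin m, k < l → σ (evenIdx k) < σ (evenIdx l)) then
      (Equiv.Perm.sign σ : ℤ) • ∏ k : Fin m, A (σ (evenIdx k)) (σ (oddIdx k))
    else 0

section Aux
theorem sumEquiv_apply_inl {a b c : ℕ} (h : a + b = c) (k : Fin a) :
    (finSumFinEquiv.trans (finCongr h)) (Sum.inl k) = ⟨k.1, by omega⟩ := by
  apply Fin.ext; simp
theorem sumEquiv_apply_inr {a b c : ℕ} (h : a + b = c) (k : Fin b) :
    (finSumFinEquiv.trans (finCongr h)) (Sum.inr k) = ⟨a + k.1, by omega⟩ := by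
  apply Fin.ext; simp
theorem sumEquiv_symm_apply {a b c : ℕ} (h : a + b = c) (i : Fin c) :
    (finSumFinEquiv.trans (finCongr h)).symm i =
      if hia : i.1 < a then Sum.inl ⟨i.1, hia⟩ else Sum.inr ⟨i.1 - a, by omega⟩ := by
  rw [Equiv.symm_apply_eq]
  split_ifs with hia
  · rw [sumEquiv_apply_inl]
  · rw [sumEquiv_apply_inr]; apply Fin.ext; simp; omega
theorem conj_val {a b c : ℕ} (h : a + b = c) (p : Equiv.Perm (Fin a)) (q : Equiv.Perm (Fin b))
    (i : Fin c) :
    ((finSumFinEquiv.trans (finCongr h)).permCongr (Equiv.sumCongr p q)) i =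
      if hia : i.1 < a then (⟨(p ⟨i.1, hia⟩).1, by have := (p ⟨i.1, hia⟩).isLt; omega⟩ : Fin c)
      else ⟨a + (q ⟨i.1 - a, by omega⟩).1, by have := (q ⟨i.1 - a, by omega⟩).isLt; omega⟩ := by
  rw [Equiv.permCongr_apply, sumEquiv_symm_apply h]
  split_ifs with hia
  · rw [Equiv.sumCongr_apply, Sum.map_inl, sumEquiv_apply_inl]
  · rw [Equiv.sumCongr_apply, Sum.map_inr, sumEquiv_apply_inr]
end Aux

/-- The "unshuffle" permutation `2k ↦ k`, `2k+1 ↦ N + k`. -/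
def unshuffle (N : ℕ) : Equiv.Perm (Fin (2 * N)) where
  toFun i := if i.1 % 2 = 0 then ⟨i.1 / 2, by have := i.isLt; omega⟩
    else ⟨N + i.1 / 2, by have := i.isLt; omega⟩
  invFun j := if h : j.1 < N then ⟨2 * j.1, by omega⟩
    else ⟨2 * (j.1 - N) + 1, by have := j.isLt; omega⟩
  left_inv i := by
    rcases i with ⟨i, hi⟩
    by_cases h : i % 2 = 0
    · simp only [if_pos h]
      rw [dif_pos (show (⟨i / 2, by omega⟩ : Fin (2 * N)).1 < N by simp only [Fin.val_mk]; omega)]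
      exact Fin.ext (by simp only [Fin.val_mk]; omega)
    · simp only [if_neg h]
      rw [dif_neg (show ¬ (⟨N + i / 2, by omega⟩ : Fin (2 * N)).1 < N by
        simp only [Fin.val_mk]; omega)]
      exact Fin.ext (by simp only [Fin.val_mk]; omega)
  right_inv j := by
    rcases j with ⟨j, hj⟩
    by_cases h : j < N
    · simp only [dif_pos h]
      rw [if_pos (show (⟨2 * j, by omega⟩ : Fin (2 * N)).1 % 2 = 0 by simp only [Fin.val_mk]; omega)]
      exact Fin.ext (by simp only [Fin.val_mk]; omega)
    · simp only [dif_neg h]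
      rw [if_neg (show ¬ (⟨2 * (j - N) + 1, by omega⟩ : Fin (2 * N)).1 % 2 = 0 by
        simp only [Fin.val_mk]; omega)]
      exact Fin.ext (by simp only [Fin.val_mk]; omega)

theorem unshuffle_val {N : ℕ} (i : Fin (2 * N)) :
    (unshuffle N i).1 = if i.1 % 2 = 0 then i.1 / 2 else N + i.1 / 2 := by
  rcases i with ⟨i, hi⟩
  by_cases h : i % 2 = 0 <;> simp [unshuffle, Equiv.coe_fn_mk, h]


theorem unshuffle_even {N : ℕ} (k : Fin N) :
    unshuffle N (evenIdx k) = ⟨k.1, by have := k.isLt; omega⟩ := by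
  apply Fin.ext
  rw [unshuffle_val]
  show (if 2 * k.1 % 2 = 0 then 2 * k.1 / 2 else N + 2 * k.1 / 2) = k.1
  rw [if_pos (by omega)]
  omega

theorem unshuffle_odd {N : ℕ} (k : Fin N) :
    unshuffle N (oddIdx k) = ⟨N + k.1, by have := k.isLt; omega⟩ := by
  apply Fin.ext
  rw [unshuffle_val]
  show (if (2 * k.1 + 1) % 2 = 0 then (2 * k.1 + 1) / 2 else N + (2 * k.1 + 1) / 2) = N + k.1
  rw [if_neg (by omega)]
  omega

theorem finRotate_val {n : ℕ} (i : Fin (n + 1)) :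
    (finRotate (n + 1) i).1 = (i.1 + 1) % (n + 1) := by
  rw [finRotate_succ_apply, Fin.add_def]
  simp [Fin.val_one', Nat.add_mod_mod]

def rot1 (N : ℕ) : Equiv.Perm (Fin (N + 2)) :=
  (finSumFinEquiv.trans (finCongr (show (N + 1) + 1 = N + 2 by omega))).permCongr
    (Equiv.sumCongr (finRotate (N + 1)) (Equiv.refl (Fin 1)))

def cyc (N : ℕ) : Equiv.Perm (Fin (2 * (N + 1))) :=
  (finSumFinEquiv.trans (finCongr (show N + (N + 2) = 2 * (N + 1) by omega))).permCongr
    (Equiv.sumCongr (Equiv.refl (Fin N)) (rot1 N))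

def ext2 (N : ℕ) : Equiv.Perm (Fin (2 * (N + 1))) :=
  (finSumFinEquiv.trans (finCongr (show 2 * N + 2 = 2 * (N + 1) by omega))).permCongr
    (Equiv.sumCongr (unshuffle N) (Equiv.refl (Fin 2)))

theorem rot1_val (N : ℕ) (j : Fin (N + 2)) :
    (rot1 N j).1 = if j.1 ≤ N then (if j.1 = N then 0 else j.1 + 1) else j.1 := by
  unfold rot1
  rw [conj_val]
  rcases j with ⟨j, hj⟩
  simp only [Fin.val_mk]
  by_cases h1 : j < N + 1
  · rw [dif_pos h1]
    simp only [Fin.val_mk, finRotate_val]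
    by_cases h2 : j = N
    · rw [if_pos (by omega), if_pos h2, h2, Nat.mod_self]
    · rw [if_pos (by omega), if_neg h2, Nat.mod_eq_of_lt (by omega)]
  · rw [dif_neg h1]
    simp only [Equiv.refl_apply, Fin.val_mk]
    rw [if_neg (by omega)]
    omega

theorem cyc_val (N : ℕ) (i : Fin (2 * (N + 1))) :
    (cyc N i).1 = if i.1 < N then i.1 else if i.1 < 2 * N then i.1 + 1
      else if i.1 = 2 * N then N else i.1 := by
  unfold cyc
  rw [conj_val]
  rcases i with ⟨i, hi⟩
  simp only [Fin.val_mk]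
  by_cases h1 : i < N
  · rw [dif_pos h1, if_pos h1]
    simp
  · rw [dif_neg h1, if_neg h1]
    simp only [Fin.val_mk, rot1_val]
    split_ifs <;> omega

theorem ext2_val (N : ℕ) (i : Fin (2 * (N + 1))) :
    (ext2 N i).1 = if i.1 < 2 * N then (if i.1 % 2 = 0 then i.1 / 2 else N + i.1 / 2)
      else i.1 := by
  unfold ext2
  rw [conj_val]
  rcases i with ⟨i, hi⟩
  simp only [Fin.val_mk]
  by_cases h1 : i < 2 * N
  · rw [dif_pos h1, if_pos h1]
    simp only [Fin.val_mk, unshuffle_val]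
  · rw [dif_neg h1, if_neg h1]
    simp only [Equiv.refl_apply, Fin.val_mk]
    omega

theorem unshuffle_succ (N : ℕ) : unshuffle (N + 1) = (ext2 N).trans (cyc N) := by
  apply Equiv.ext
  intro i
  apply Fin.ext
  rw [Equiv.trans_apply, unshuffle_val, cyc_val]
  simp only [ext2_val]
  have hi := i.isLt
  split_ifs <;> omega

theorem sign_unshuffle (N : ℕ) :
    Equiv.Perm.sign (unshuffle N) = (-1) ^ (N * (N - 1) / 2) := by
  induction N with
  | zero =>
    have h : unshuffle 0 = 1 := by
      apply Equiv.ext; intro i; exact i.elim0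
    rw [h]
    simp
  | succ N ih =>
    have hmul : unshuffle (N + 1) = cyc N * ext2 N := unshuffle_succ N
    rw [hmul, _root_.map_mul]
    have hc : Equiv.Perm.sign (cyc N) = (-1) ^ N := by
      unfold cyc rot1
      simp [Equiv.Perm.sign_permCongr, Equiv.Perm.sign_sumCongr, sign_finRotate]
    have hE : Equiv.Perm.sign (ext2 N) = Equiv.Perm.sign (unshuffle N) := by
      unfold ext2
      simp [Equiv.Perm.sign_permCongr, Equiv.Perm.sign_sumCongr]
    rw [hc, hE, ih, ← pow_add]
    congr 1
    rw [Nat.triangle_succ]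
    omega

/-- The permutation associated to `π : Perm (Fin N)`:
`2k ↦ k`, `2k+1 ↦ N + π k`. -/
def msigma {N : ℕ} (π : Equiv.Perm (Fin N)) : Equiv.Perm (Fin (2 * N)) :=
  (unshuffle N).trans
    ((finSumFinEquiv.trans (finCongr (two_mul N).symm)).permCongr
      (Equiv.sumCongr (Equiv.refl (Fin N)) π))

theorem msigma_even {N : ℕ} (π : Equiv.Perm (Fin N)) (k : Fin N) :
    msigma π (evenIdx k) = ⟨k.1, by have := k.isLt; omega⟩ := by
  unfold msigma
  rw [Equiv.trans_apply, unshuffle_even, conj_val]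
  rw [dif_pos (show (⟨k.1, by have := k.isLt; omega⟩ : Fin (2 * N)).1 < N from k.isLt)]
  exact Fin.ext (by simp)

theorem msigma_odd {N : ℕ} (π : Equiv.Perm (Fin N)) (k : Fin N) :
    msigma π (oddIdx k) = ⟨N + (π k).1, by have := (π k).isLt; omega⟩ := by
  unfold msigma
  rw [Equiv.trans_apply, unshuffle_odd, conj_val]
  rw [dif_neg (show ¬ (⟨N + k.1, by have := k.isLt; omega⟩ : Fin (2 * N)).1 < N by
    simp only [Fin.val_mk]; omega)]
  apply Fin.ext
  show N + _ = N + _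
  congr 2
  congr 1
  apply Fin.ext
  show N + k.1 - N = k.1
  omega

theorem msigma_injective {N : ℕ} : Function.Injective (msigma (N := N)) := by
  intro π π' h
  apply Equiv.ext
  intro k
  have h2 := congrArg (fun σ : Equiv.Perm (Fin (2 * N)) => σ (oddIdx k)) h
  simp only [msigma_odd] at h2
  apply Fin.ext
  have := congrArg Fin.val h2
  simp only [Fin.val_mk] at this
  omega

theorem sign_msigma {N : ℕ} (π : Equiv.Perm (Fin N)) :
    Equiv.Perm.sign (msigma π) = Equiv.Perm.sign (unshuffle N) * Equiv.Perm.sign π := by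
  have : msigma π = ((finSumFinEquiv.trans (finCongr (two_mul N).symm)).permCongr
      (Equiv.sumCongr (Equiv.refl (Fin N)) π)) * unshuffle N := rfl
  rw [this, _root_.map_mul, Equiv.Perm.sign_permCongr, Equiv.Perm.sign_sumCongr]
  simp [mul_comm]

theorem A_apply {R : Type*} [CommRing R] {N : ℕ} (M : Matrix (Fin N) (Fin N) R)
    (i j : Fin (2 * N)) :
    Matrix.reindex (finSumFinEquiv.trans (finCongr (two_mul N).symm))
        (finSumFinEquiv.trans (finCongr (two_mul N).symm))
        (Matrix.fromBlocks 0 M (-Mᵀ) 0) i j =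
      if hi : i.1 < N then
        (if hj : j.1 < N then 0 else M ⟨i.1, hi⟩ ⟨j.1 - N, by have := j.isLt; omega⟩)
      else
        (if hj : j.1 < N then -(M ⟨j.1, hj⟩ ⟨i.1 - N, by have := i.isLt; omega⟩) else 0) := by
  rw [Matrix.reindex_apply, Matrix.submatrix_apply, sumEquiv_symm_apply, sumEquiv_symm_apply]
  split_ifs <;> simp [Matrix.fromBlocks]

theorem msigma_cond {N : ℕ} (π : Equiv.Perm (Fin N)) :
    (∀ k : Fin N, msigma π (evenIdx k) < msigma π (oddIdx k)) ∧
      (∀ k l : Fin N, k < l → msigma π (evenIdx k) < msigma π (evenIdx l)) := by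
  constructor
  · intro k
    rw [msigma_even, msigma_odd, Fin.mk_lt_mk]
    have := k.isLt
    omega
  · intro k l h
    rw [msigma_even, msigma_even, Fin.mk_lt_mk]
    exact h

theorem classification {R : Type*} [CommRing R] {N : ℕ} (M : Matrix (Fin N) (Fin N) R)
    (σ : Equiv.Perm (Fin (2 * N)))
    (h1 : ∀ k : Fin N, σ (evenIdx k) < σ (oddIdx k))
    (h2 : ∀ k l : Fin N, k < l → σ (evenIdx k) < σ (evenIdx l)) :
    (∃ k : Fin N,
      Matrix.reindex (finSumFinEquiv.trans (finCongr (two_mul N).symm))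
        (finSumFinEquiv.trans (finCongr (two_mul N).symm))
        (Matrix.fromBlocks 0 M (-Mᵀ) 0) (σ (evenIdx k)) (σ (oddIdx k)) = 0) ∨
    ∃ π : Equiv.Perm (Fin N), σ = msigma π := by
  by_cases hmix : ∀ k : Fin N, (σ (evenIdx k)).1 < N ∧ N ≤ (σ (oddIdx k)).1
  · right
    have hsm : StrictMono (fun k : Fin N => (⟨(σ (evenIdx k)).1, (hmix k).1⟩ : Fin N)) := by
      intro k l hkl
      rw [Fin.mk_lt_mk]
      have := h2 k l hkl
      rwa [Fin.lt_def] at this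
    have hid : (fun k : Fin N => (⟨(σ (evenIdx k)).1, (hmix k).1⟩ : Fin N)) = id := by
      haveI : WellFoundedLT (Fin N) := inferInstance
      refine (StrictMono.range_inj hsm strictMono_id).1 ?_
      rw [Set.range_id]
      exact Set.range_eq_univ.mpr (Finite.injective_iff_surjective.mp hsm.injective)
    have hf : ∀ k : Fin N, (σ (evenIdx k)).1 = k.1 := fun k =>
      congrArg Fin.val (congrFun hid k)
    have hg : Function.Bijective (fun k : Fin N =>
        (⟨(σ (oddIdx k)).1 - N, by have := (σ (oddIdx k)).isLt; omega⟩ : Fin N)) := by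
      refine Finite.injective_iff_bijective.mp ?_
      intro k l hkl
      have hv : (σ (oddIdx k)).1 - N = (σ (oddIdx l)).1 - N := congrArg Fin.val hkl
      have hσ : σ (oddIdx k) = σ (oddIdx l) := by
        apply Fin.ext
        have := (hmix k).2
        have := (hmix l).2
        omega
      have hodd := σ.injective hσ
      have := congrArg Fin.val hodd
      simp only [oddIdx] at this
      exact Fin.ext (by omega)
    refine ⟨Equiv.ofBijective _ hg, ?_⟩
    apply Equiv.ext
    intro i
    rcases Nat.even_or_odd i.1 with he | ho
    · have hk : i = evenIdx (⟨i.1 / 2, by have := i.isLt; omega⟩ : Fin N) := by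
        apply Fin.ext
        simp only [evenIdx]
        obtain ⟨t, ht⟩ := he
        omega
      rw [hk, msigma_even]
      exact Fin.ext (hf _)
    · have hk : i = oddIdx (⟨i.1 / 2, by have := i.isLt; omega⟩ : Fin N) := by
        apply Fin.ext
        simp only [oddIdx]
        obtain ⟨t, ht⟩ := ho
        omega
      rw [hk, msigma_odd]
      apply Fin.ext
      simp only [Equiv.ofBijective_apply]
      show (σ (oddIdx _)).1 = N + ((σ (oddIdx _)).1 - N)
      have := (hmix (⟨i.1 / 2, by have := i.isLt; omega⟩ : Fin N)).2
      omega
  · left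
    push_neg at hmix
    obtain ⟨k, hk⟩ := hmix
    refine ⟨k, ?_⟩
    rw [A_apply]
    have hlt := h1 k
    rw [Fin.lt_def] at hlt
    by_cases ha : (σ (evenIdx k)).1 < N
    · have hb : (σ (oddIdx k)).1 < N := by
        by_contra hq
        exact absurd (hk ha) (by omega)
      rw [dif_pos ha, dif_pos hb]
    · rw [dif_neg ha, dif_neg (show ¬ (σ (oddIdx k)).1 < N by omega)]

theorem stmt2 (R : Type*) [CommRing R] (N : ℕ) (M : Matrix (Fin N) (Fin N) R) :
    pfaffian
      (Matrix.reindex (finSumFinEquiv.trans (finCongr (two_mul N).symm))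
        (finSumFinEquiv.trans (finCongr (two_mul N).symm))
        (Matrix.fromBlocks 0 M (-Mᵀ) 0)) =
      (-1 : R) ^ (N * (N - 1) / 2) * M.det := by
  classical
  have step1 : pfaffian
      (Matrix.reindex (finSumFinEquiv.trans (finCongr (two_mul N).symm))
        (finSumFinEquiv.trans (finCongr (two_mul N).symm))
        (Matrix.fromBlocks 0 M (-Mᵀ) 0)) =
      ∑ π : Equiv.Perm (Fin N), (Equiv.Perm.sign (msigma π) : ℤ) •
        ∏ k : Fin N,
          Matrix.reindex (finSumFinEquiv.trans (finCongr (two_mul N).symm))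
            (finSumFinEquiv.trans (finCongr (two_mul N).symm))
            (Matrix.fromBlocks 0 M (-Mᵀ) 0) (msigma π (evenIdx k)) (msigma π (oddIdx k)) := by
    unfold pfaffian
    rw [← Finset.sum_subset (Finset.subset_univ
      ((Finset.univ : Finset (Equiv.Perm (Fin N))).image msigma))]
    · rw [Finset.sum_image (fun π _ π' _ h => msigma_injective h)]
      exact Finset.sum_congr rfl fun π _ => if_pos (msigma_cond π)
    · intro σ _ hσ
      by_cases hcond : (∀ k : Fin N, σ (evenIdx k) < σ (oddIdx k)) ∧
          (∀ k l : Fin N, k < l → σ (evenIdx k) < σ (evenIdx l))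
      · rw [if_pos hcond]
        rcases classification M σ hcond.1 hcond.2 with ⟨k, hk⟩ | ⟨π, rfl⟩
        · rw [Finset.prod_eq_zero (Finset.mem_univ k) hk, smul_zero]
        · exact absurd (Finset.mem_image_of_mem _ (Finset.mem_univ π)) hσ
      · rw [if_neg hcond]
  rw [step1]
  have step2 : ∀ π : Equiv.Perm (Fin N),
      (Equiv.Perm.sign (msigma π) : ℤ) •
        ∏ k : Fin N,
          Matrix.reindex (finSumFinEquiv.trans (finCongr (two_mul N).symm))
            (finSumFinEquiv.trans (finCongr (two_mul N).symm))
            (Matrix.fromBlocks 0 M (-Mᵀ) 0) (msigma π (evenIdx k)) (msigma π (oddIdx k)) =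
      ((-1 : ℤ) ^ (N * (N - 1) / 2)) • ((Equiv.Perm.sign π : ℤ) • ∏ k : Fin N, M k (π k)) := by
    intro π
    have hprod : ∏ k : Fin N,
        Matrix.reindex (finSumFinEquiv.trans (finCongr (two_mul N).symm))
          (finSumFinEquiv.trans (finCongr (two_mul N).symm))
          (Matrix.fromBlocks 0 M (-Mᵀ) 0) (msigma π (evenIdx k)) (msigma π (oddIdx k)) =
        ∏ k : Fin N, M k (π k) := by
      refine Finset.prod_congr rfl fun k _ => ?_
      rw [msigma_even, msigma_odd, A_apply]
      rw [dif_pos (show ((⟨k.1, by have := k.isLt; omega⟩ : Fin (2 * N))).1 < N from k.isLt)]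
      rw [dif_neg (show ¬ ((⟨N + (π k).1, by have := (π k).isLt; omega⟩ : Fin (2 * N))).1 < N by
        show ¬ N + (π k).1 < N; omega)]
      congr 1
      apply Fin.ext
      show N + (π k).1 - N = (π k).1
      omega
    rw [hprod, sign_msigma, sign_unshuffle]
    rw [Units.val_mul, mul_smul]
    norm_cast
  rw [Finset.sum_congr rfl fun π _ => step2 π, ← Finset.smul_sum]
  have hdet : ∑ π : Equiv.Perm (Fin N), (Equiv.Perm.sign π : ℤ) • ∏ k : Fin N, M k (π k) =
      M.det := by
    rw [← Matrix.det_transpose, Matrix.det_apply]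
    refine Finset.sum_congr rfl fun π _ => ?_
    rw [Units.smul_def]
    congr 1
  rw [hdet, zsmul_eq_mul]
  push_cast
  rfl
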